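/- Let U, V be Hilbert spaces and b: U × V → ℝ a continuous bilinear form satisfying the inf-sup condition: there exists α > 0 with α‖u‖_U ≤ sup_{0 ≠ v ∈ V} b(u,v)/‖v‖_V for all u ∈ U. Let V₀ = {v ∈ V : b(u,v) = 0 for all u ∈ U}. Then for every continuous linear functional ℓ ∈ V' that vanishes on V₀, the problem: find u ∈ U with b(u,v) = ℓ(v) for all v ∈ V, has a unique solution, and ‖u‖_U ≤ (1/α)‖ℓ‖_{V'}. -/

import Mathlib

/-- Babuška–Nečas.  If the continuous bilinear form
`b : U × V → ℝ` on real Hilbert spaces satisfies the inf-sup condition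
`α‖u‖ ≤ sup_{v ≠ 0} b(u,v)/‖v‖ = ‖b u‖_{V'}`, then for every `ℓ ∈ V'`
vanishing on `V₀ = {v : b(u,v) = 0 ∀u}` the problem `b(u,v) = ℓ(v) ∀v` has a
unique solution, with `‖u‖ ≤ (1/α)‖ℓ‖`. -/
theorem babuska_necas
    {U V : Type*}
    [NormedAddCommGroup U] [InnerProductSpace ℝ U] [CompleteSpace U]
    [NormedAddCommGroup V] [InnerProductSpace ℝ V] [CompleteSpace V]
    (b : U →L[ℝ] V →L[ℝ] ℝ)
    (α : ℝ) (hα : 0 < α)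
    (hinfsup : ∀ u : U, α * ‖u‖ ≤ ‖b u‖)
    (ℓ : V →L[ℝ] ℝ)
    (hℓ : ∀ v : V, (∀ u : U, b u v = 0) → ℓ v = 0) :
    (∃! u : U, ∀ v : V, b u v = ℓ v) ∧
    (∀ u : U, (∀ v : V, b u v = ℓ v) → ‖u‖ ≤ (1 / α) * ‖ℓ‖) := by
  classical
  -- A : U →L V realizing b via Riesz
  set A : U →L[ℝ] V :=
    ((InnerProductSpace.toDual ℝ V).symm.toContinuousLinearEquiv.toContinuousLinearMap).comp b
    with hA
  have hAb : ∀ u v, (inner ℝ (A u) v : ℝ) = b u v := by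
    intro u v
    simp [hA, InnerProductSpace.toDual_symm_apply]
  have hnormA : ∀ u, ‖A u‖ = ‖b u‖ := by
    intro u
    simp [hA]
  -- antilipschitz ⇒ closed range
  have hanti : AntilipschitzWith (⟨α⁻¹, by positivity⟩) A := by
    apply ContinuousLinearMap.antilipschitz_of_bound
    intro u
    rw [hnormA]
    rw [← mul_le_mul_iff_right₀ hα, ← mul_assoc]
    show α * ‖u‖ ≤ α * α⁻¹ * ‖b u‖
    rw [mul_inv_cancel₀ hα.ne', one_mul]
    exact hinfsup u
  have hclosed : IsClosed (Set.range A) :=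
    (hanti.isClosedEmbedding A.uniformContinuous).isClosed_range
  set K : Submodule ℝ V := LinearMap.range (A : U →ₗ[ℝ] V) with hK
  have hKclosed : IsClosed (K : Set V) := by
    exact hclosed
  -- the Riesz representative of ℓ
  set w : V := (InnerProductSpace.toDual ℝ V).symm ℓ with hw
  have hwv : ∀ v, (inner ℝ w v : ℝ) = ℓ v := fun v =>
    InnerProductSpace.toDual_symm_apply
  have hmem : w ∈ Kᗮᗮ := by
    rw [Submodule.mem_orthogonal]
    intro v hv
    have hbv : ∀ u, b u v = 0 := by
      intro u
      rw [← hAb]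
      exact (Submodule.mem_orthogonal K v).mp hv (A u) ⟨u, rfl⟩
    rw [real_inner_comm, hwv, hℓ v hbv]
  have hKK : Kᗮᗮ = K := by
    rw [Submodule.orthogonal_orthogonal_eq_closure]
    exact IsClosed.submodule_topologicalClosure_eq hKclosed
  rw [hKK] at hmem
  obtain ⟨u₀, hu₀⟩ := hmem
  have hsol : ∀ v, b u₀ v = ℓ v := by
    intro v
    rw [← hAb, show A u₀ = w from hu₀, hwv]
  -- norm bound
  have hbound : ∀ u : U, (∀ v : V, b u v = ℓ v) → ‖u‖ ≤ (1 / α) * ‖ℓ‖ := by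
    intro u hu
    have hbu : b u = ℓ := by ext v; exact hu v
    have := hinfsup u
    rw [hbu] at this
    rw [div_mul_eq_mul_div, le_div_iff₀ hα, one_mul, mul_comm]
    exact this
  refine ⟨⟨u₀, hsol, ?_⟩, hbound⟩
  intro u hu
  have h0 : b (u - u₀) = 0 := by
    ext v
    simp [map_sub, hu v, hsol v]
  have := hinfsup (u - u₀)
  rw [h0, norm_zero] at this
  have h1 : ‖u - u₀‖ ≤ 0 := by nlinarith
  have h2 : u - u₀ = 0 := norm_eq_zero.mp (le_antisymm h1 (norm_nonneg _))
  exact sub_eq_zero.mp h2
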